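/- arXiv:2002.02561 — 9 statements merged into one kernel-verified Lean document; each statement's English description precedes it below -/
import Mathlib

section
/- Fix an integer M ≥ 1, real numbers λ_1, …, λ_M > 0, and λ > 0. For every real p ≥ 0 there exists exactly one real t > 0 satisfying the implicit equation t = Σ_{ρ=1}^M (1/λ_ρ + p/(λ + t))⁻¹. Moreover this unique solution t(p) satisfies t(p) ≤ Σ_{ρ=1}^M λ_ρ, with equality if and only if p = 0. -/
/-- for eigenvalues `λ_ρ > 0`, ridge parameter `λ > 0` and any `p ≥ 0`,
the implicit learning-curve equation `t = Σ_ρ (1/λ_ρ + p/(λ + t))⁻¹` has exactly one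
positive solution, and every positive solution satisfies `t ≤ Σ_ρ λ_ρ`, with equality
iff `p = 0`. -/
theorem implicit_equation_unique_solution (M : ℕ) (hM : 0 < M)
    (lam : Fin M → ℝ) (hlam : ∀ ρ, 0 < lam ρ) (l : ℝ) (hl : 0 < l)
    (p : ℝ) (hp : 0 ≤ p) :
    (∃! t : ℝ, 0 < t ∧ t = ∑ ρ, (1 / lam ρ + p / (l + t))⁻¹) ∧
    ∀ t : ℝ, 0 < t → t = ∑ ρ, (1 / lam ρ + p / (l + t))⁻¹ →
      t ≤ (∑ ρ, lam ρ) ∧ (t = (∑ ρ, lam ρ) ↔ p = 0) := by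
  haveI : Nonempty (Fin M) := ⟨⟨0, hM⟩⟩
  set S := ∑ ρ, lam ρ with hS
  have hSpos : 0 < S := Finset.sum_pos (fun ρ _ => hlam ρ) Finset.univ_nonempty
  -- basic positivity facts
  have hden : ∀ t : ℝ, 0 ≤ t → ∀ ρ : Fin M, 0 < 1 / lam ρ + p / (l + t) := by
    intro t ht ρ
    have h1 : 0 < l + t := by linarith
    have h2 : 0 < 1 / lam ρ := by have := hlam ρ; positivity
    have h3 : 0 ≤ p / (l + t) := by positivity
    linarith
  have hterm_pos : ∀ t : ℝ, 0 ≤ t → ∀ ρ : Fin M, 0 < (1 / lam ρ + p / (l + t))⁻¹ :=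
    fun t ht ρ => inv_pos.mpr (hden t ht ρ)
  have hterm_le : ∀ t : ℝ, 0 ≤ t → ∀ ρ : Fin M, (1 / lam ρ + p / (l + t))⁻¹ ≤ lam ρ := by
    intro t ht ρ
    have h1 : 0 < l + t := by linarith
    have h2 : 0 < 1 / lam ρ := by have := hlam ρ; positivity
    have h3 : 0 ≤ p / (l + t) := by positivity
    have h4 : ((1:ℝ) / lam ρ)⁻¹ = lam ρ := by
      field_simp
    have := inv_anti₀ h2 (by linarith : 1 / lam ρ ≤ 1 / lam ρ + p / (l + t))
    rwa [h4] at this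
  -- reformulated equation
  have hkey : ∀ t : ℝ, 0 < t → t = ∑ ρ, (1 / lam ρ + p / (l + t))⁻¹ →
      t / (l + t) = ∑ ρ, ((l + t) / lam ρ + p)⁻¹ := by
    intro t ht heq
    have h1 : 0 < l + t := by linarith
    nth_rewrite 1 [heq]
    rw [Finset.sum_div]
    refine Finset.sum_congr rfl fun ρ _ => ?_
    have ha := hlam ρ
    have hrw : (l + t) / lam ρ + p = (1 / lam ρ + p / (l + t)) * (l + t) := by
      field_simp
    rw [hrw, mul_inv, div_eq_mul_inv]
  -- uniqueness core
  have huniq : ∀ t1 t2 : ℝ, 0 < t1 → 0 < t2 →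
      t1 = ∑ ρ, (1 / lam ρ + p / (l + t1))⁻¹ →
      t2 = ∑ ρ, (1 / lam ρ + p / (l + t2))⁻¹ → ¬ t1 < t2 := by
    intro t1 t2 ht1 ht2 he1 he2 hlt
    have h1 : 0 < l + t1 := by linarith
    have h2 : 0 < l + t2 := by linarith
    have hmono : t1 / (l + t1) < t2 / (l + t2) := by
      rw [div_lt_div_iff₀ h1 h2]; nlinarith
    have hsum : (∑ ρ, ((l + t2) / lam ρ + p)⁻¹) ≤ ∑ ρ, ((l + t1) / lam ρ + p)⁻¹ := by
      refine Finset.sum_le_sum fun ρ _ => ?_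
      have ha := hlam ρ
      refine inv_anti₀ (by positivity) ?_
      have hd : (l + t1) / lam ρ ≤ (l + t2) / lam ρ := by
        gcongr
      linarith
    rw [hkey t1 ht1 he1, hkey t2 ht2 he2] at hmono
    linarith
  -- existence via IVT
  have hex : ∃ t : ℝ, 0 < t ∧ t = ∑ ρ, (1 / lam ρ + p / (l + t))⁻¹ := by
    set g : ℝ → ℝ := fun t => t - ∑ ρ, (1 / lam ρ + p / (l + t))⁻¹ with hg
    have hcont : ContinuousOn g (Set.Icc 0 S) := by
      apply ContinuousOn.sub continuousOn_id
      apply continuousOn_finset_sum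
      intro ρ _
      apply ContinuousOn.inv₀
      · exact continuousOn_const.add (continuousOn_const.div
          (continuous_const.add continuous_id).continuousOn
          (fun t ht => by have := ht.1; positivity))
      · intro t ht
        exact ne_of_gt (hden t ht.1 ρ)
    have hg0 : g 0 ≤ 0 := by
      have : 0 < ∑ ρ, (1 / lam ρ + p / (l + 0))⁻¹ :=
        Finset.sum_pos (fun ρ _ => hterm_pos 0 le_rfl ρ) Finset.univ_nonempty
      simp only [hg]; linarith
    have hgS : 0 ≤ g S := by
      have : (∑ ρ, (1 / lam ρ + p / (l + S))⁻¹) ≤ S :=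
        Finset.sum_le_sum (fun ρ _ => hterm_le S hSpos.le ρ)
      simp only [hg]; linarith
    have := intermediate_value_Icc hSpos.le hcont
    have h0mem : (0 : ℝ) ∈ Set.Icc (g 0) (g S) := ⟨hg0, hgS⟩
    obtain ⟨t, htmem, hgt⟩ := this h0mem
    have heq : t = ∑ ρ, (1 / lam ρ + p / (l + t))⁻¹ := by
      have := sub_eq_zero.mp hgt
      simpa [hg] using this
    refine ⟨t, ?_, heq⟩
    rw [heq]
    exact Finset.sum_pos (fun ρ _ => hterm_pos t htmem.1 ρ) Finset.univ_nonempty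
  constructor
  · obtain ⟨t, ht, heq⟩ := hex
    refine ⟨t, ⟨ht, heq⟩, ?_⟩
    rintro y ⟨hy, hyeq⟩
    rcases lt_trichotomy y t with h | h | h
    · exact absurd h (huniq y t hy ht hyeq heq)
    · exact h
    · exact absurd h (huniq t y ht hy heq hyeq)
  · intro t ht heq
    have hle : t ≤ S := by
      rw [heq]; exact Finset.sum_le_sum (fun ρ _ => hterm_le t ht.le ρ)
    refine ⟨hle, ?_, ?_⟩
    · intro htS
      by_contra hp0
      have hppos : 0 < p := lt_of_le_of_ne hp (Ne.symm hp0)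
      have hstrict : (∑ ρ, (1 / lam ρ + p / (l + t))⁻¹) < S := by
        apply Finset.sum_lt_sum_of_nonempty Finset.univ_nonempty
        intro ρ _
        have h1 : 0 < l + t := by linarith
        have h2 : 0 < 1 / lam ρ := by have := hlam ρ; positivity
        have h3 : 0 < p / (l + t) := by positivity
        have h4 : ((1:ℝ) / lam ρ)⁻¹ = lam ρ := by
          field_simp
        have := inv_strictAnti₀ h2 (by linarith : 1 / lam ρ < 1 / lam ρ + p / (l + t))
        rwa [h4] at this
      rw [← heq] at hstrict
      linarith
    · intro hp0
      subst hp0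
      rw [heq]
      refine Finset.sum_congr rfl fun ρ _ => ?_
      simp [one_div, inv_inv]
end

section
/- Fix an integer M ≥ 1, real numbers λ_1, …, λ_M > 0, and λ > 0, and for p ≥ 0 let t(p) > 0 solve the implicit equation t = Σ_{ρ=1}^M (1/λ_ρ + p/(λ + t))⁻¹, with γ(p) = Σ_ρ (1/λ_ρ + p/(λ + t(p)))⁻². Then p·γ(p) ≤ t(p)·(λ + t(p)) < (λ + t(p))². In particular 1 − p·γ(p)/(λ + t(p))² > 0, so the denominator appearing in the paper's mode error formula E_ρ(p) = (w̄_ρ²/λ_ρ) g_ρ(p)² (1 − p γ(p)/(λ + t(p))²)⁻¹ is strictly positive and each mode error is nonnegative. -/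
/-- at any positive solution `t` of the implicit learning-curve equation,
with `γ = Σ_ρ (1/λ_ρ + p/(λ+t))⁻²`, one has `p·γ ≤ t·(λ+t) < (λ+t)²`; in particular
`1 − p·γ/(λ+t)² > 0`, so the denominator in the mode error formula is strictly positive
and each mode error `E_ρ = (w̄_ρ²/λ_ρ) g_ρ² (1 − pγ/(λ+t)²)⁻¹` is nonnegative. -/
theorem mode_error_denominator_positive (M : ℕ) (hM : 0 < M)
    (lam : Fin M → ℝ) (hlam : ∀ ρ, 0 < lam ρ) (l : ℝ) (hl : 0 < l)
    (p : ℝ) (hp : 0 ≤ p) (t : ℝ) (ht : 0 < t)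
    (heq : t = ∑ ρ, (1 / lam ρ + p / (l + t))⁻¹) :
    let γ : ℝ := ∑ ρ, ((1 / lam ρ + p / (l + t))⁻¹) ^ 2
    p * γ ≤ t * (l + t) ∧
    t * (l + t) < (l + t) ^ 2 ∧
    0 < 1 - p * γ / (l + t) ^ 2 ∧
    ∀ (wbar : Fin M → ℝ) (ρ : Fin M),
      0 ≤ (wbar ρ ^ 2 / lam ρ) * ((1 / lam ρ + p / (l + t))⁻¹) ^ 2
            * (1 - p * γ / (l + t) ^ 2)⁻¹ := by
  intro γ
  have hlt : 0 < l + t := by linarith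
  have ha : ∀ ρ : Fin M, 0 < 1 / lam ρ + p / (l + t) := fun ρ => by
    have := hlam ρ
    have h1 : 0 < 1 / lam ρ := by positivity
    have h2 : 0 ≤ p / (l + t) := by positivity
    linarith
  have key : p * γ ≤ t * (l + t) := by
    have hterm : ∀ ρ : Fin M,
        p * ((1 / lam ρ + p / (l + t))⁻¹) ^ 2 ≤ (l + t) * (1 / lam ρ + p / (l + t))⁻¹ := by
      intro ρ
      have hap := ha ρ
      set a := 1 / lam ρ + p / (l + t) with hadef
      have hne : a ≠ 0 := ne_of_gt hap
      have hpa : p ≤ a * (l + t) := by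
        have hple : p / (l + t) ≤ a := by
          have h1 : 0 < 1 / lam ρ := by have := hlam ρ; positivity
          rw [hadef]; linarith
        exact (div_le_iff₀ hlt).mp hple
      calc p * (a⁻¹)^2 ≤ (a * (l + t)) * (a⁻¹)^2 :=
            mul_le_mul_of_nonneg_right hpa (by positivity)
        _ = (l + t) * a⁻¹ := by field_simp
    calc p * γ = ∑ ρ, p * ((1 / lam ρ + p / (l + t))⁻¹) ^ 2 := by
          simp [γ, Finset.mul_sum]
      _ ≤ ∑ ρ, (l + t) * (1 / lam ρ + p / (l + t))⁻¹ :=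
          Finset.sum_le_sum fun ρ _ => hterm ρ
      _ = (l + t) * t := by rw [← Finset.mul_sum, ← heq]
      _ = t * (l + t) := by ring
  have h2 : t * (l + t) < (l + t) ^ 2 := by nlinarith
  have h3 : 0 < 1 - p * γ / (l + t) ^ 2 := by
    have hsq : (0:ℝ) < (l + t)^2 := by positivity
    rw [sub_pos, div_lt_one hsq]
    linarith
  refine ⟨key, h2, h3, fun wbar ρ => ?_⟩
  have := hlam ρ
  positivity
end

section
/- Fix an integer M ≥ 1, real numbers λ_1, …, λ_M > 0, and λ > 0. Let U ⊆ [0,∞) × [0,∞) be (relatively) open and let t : U → (0,∞) be differentiable and satisfy t(p,v) = Σ_{ρ=1}^M (1/λ_ρ + v + p/(λ + t(p,v)))⁻¹ at every (p,v) ∈ U. Define g_ρ(p,v) = (1/λ_ρ + v + p/(λ + t(p,v)))⁻¹. Then Σ_ρ g_ρ(p,v) = t(p,v), and each g_ρ satisfies the quasi-linear partial differential equation ∂g_ρ/∂p = (λ + Σ_γ g_γ)⁻¹ · ∂g_ρ/∂v on U; in particular ∂t/∂p = (λ + t)⁻¹ ∂t/∂v. (This is Proposition 2 of the paper: the implicit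 solution obtained by the method of characteristics solves the learning-curve PDE.) -/
open ContinuousLinearMap in
lemma invDeriv {f : ℝ × ℝ → ℝ} {f' : (ℝ × ℝ) →L[ℝ] ℝ} {s : Set (ℝ × ℝ)} {x : ℝ × ℝ}
    (hf : HasFDerivWithinAt f f' s x) (hx : f x ≠ 0) :
    HasFDerivWithinAt (fun y => (f y)⁻¹) ((-(f x ^ 2)⁻¹) • f') s x :=
  (hasDerivAt_inv hx).comp_hasFDerivWithinAt x hf


/-- Proposition 2 of the paper: if `t(p,v) > 0` is differentiable on a
relatively open subset `U` of `[0,∞) × [0,∞)` and satisfies the implicit equation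
`t = Σ_ρ (1/λ_ρ + v + p/(λ + t))⁻¹` on `U`, then with
`g_ρ(p,v) = (1/λ_ρ + v + p/(λ + t(p,v)))⁻¹` one has `Σ_ρ g_ρ = t`, and each `g_ρ`
satisfies the learning-curve PDE `∂g_ρ/∂p = (λ + Σ_γ g_γ)⁻¹ ∂g_ρ/∂v`; in particular
`∂t/∂p = (λ + t)⁻¹ ∂t/∂v`. -/
theorem implicit_solution_solves_pde (M : ℕ) (hM : 0 < M)
    (lam : Fin M → ℝ) (hlam : ∀ ρ, 0 < lam ρ) (l : ℝ) (hl : 0 < l)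
    (U : Set (ℝ × ℝ))
    (hU : ∃ V : Set (ℝ × ℝ), IsOpen V ∧ U = V ∩ (Set.Ici 0 ×ˢ Set.Ici 0))
    (t : ℝ × ℝ → ℝ) (htpos : ∀ q ∈ U, 0 < t q)
    (Dt : ℝ × ℝ → (ℝ × ℝ) →L[ℝ] ℝ)
    (hder : ∀ q ∈ U, HasFDerivWithinAt t (Dt q) U q)
    (heq : ∀ q ∈ U, t q = ∑ ρ, (1 / lam ρ + q.2 + q.1 / (l + t q))⁻¹) :
    ∀ q ∈ U,
      ((∑ ρ, (1 / lam ρ + q.2 + q.1 / (l + t q))⁻¹) = t q) ∧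
      (∀ ρ : Fin M, ∃ Dg : (ℝ × ℝ) →L[ℝ] ℝ,
        HasFDerivWithinAt (fun q' => (1 / lam ρ + q'.2 + q'.1 / (l + t q'))⁻¹) Dg U q ∧
        Dg (1, 0) = (l + ∑ γ, (1 / lam γ + q.2 + q.1 / (l + t q))⁻¹)⁻¹ * Dg (0, 1)) ∧
      Dt q (1, 0) = (l + t q)⁻¹ * Dt q (0, 1) := by
  intro q hq
  obtain ⟨V, hV, rfl⟩ := hU
  have hqV : q ∈ V := hq.1
  have hq1 : (0:ℝ) ≤ q.1 := hq.2.1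
  have hq2 : (0:ℝ) ≤ q.2 := hq.2.2
  have htq := htpos q hq
  have hb : 0 < l + t q := by linarith
  set b := l + t q with hbdef
  -- inner functions
  set u : Fin M → ℝ := fun ρ => 1 / lam ρ + q.2 + q.1 / b with hudef
  have hu : ∀ ρ, 0 < u ρ := by
    intro ρ
    have h1 : 0 < 1 / lam ρ := by have := hlam ρ; positivity
    have h2 : 0 ≤ q.1 / b := div_nonneg hq1 hb.le
    simp only [hudef]; linarith
  -- derivative of l + t
  have hlt : HasFDerivWithinAt (fun q' => l + t q') (Dt q) (V ∩ Set.Ici 0 ×ˢ Set.Ici 0) q :=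
    (hder q hq).const_add l
  have hinv : HasFDerivWithinAt (fun q' => (l + t q')⁻¹) ((-(b ^ 2)⁻¹) • Dt q)
      (V ∩ Set.Ici 0 ×ˢ Set.Ici 0) q := invDeriv hlt hb.ne'
  have hfst : HasFDerivWithinAt (fun q' : ℝ × ℝ => q'.1) (ContinuousLinearMap.fst ℝ ℝ ℝ)
      (V ∩ Set.Ici 0 ×ˢ Set.Ici 0) q := hasFDerivWithinAt_fst
  have hmul : HasFDerivWithinAt (fun q' : ℝ × ℝ => q'.1 * (l + t q')⁻¹)
      (q.1 • ((-(b ^ 2)⁻¹) • Dt q) + b⁻¹ • ContinuousLinearMap.fst ℝ ℝ ℝ)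
      (V ∩ Set.Ici 0 ×ˢ Set.Ici 0) q := hfst.mul hinv
  set Du : (ℝ × ℝ) →L[ℝ] ℝ :=
    ContinuousLinearMap.snd ℝ ℝ ℝ + (q.1 • ((-(b ^ 2)⁻¹) • Dt q) + b⁻¹ • ContinuousLinearMap.fst ℝ ℝ ℝ)
    with hDudef
  have hDu : ∀ ρ : Fin M, HasFDerivWithinAt (fun q' => 1 / lam ρ + q'.2 + q'.1 / (l + t q'))
      Du (V ∩ Set.Ici 0 ×ˢ Set.Ici 0) q := by
    intro ρ
    have h1 : HasFDerivWithinAt (fun q' : ℝ × ℝ => 1 / lam ρ + q'.2)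
        (ContinuousLinearMap.snd ℝ ℝ ℝ) (V ∩ Set.Ici 0 ×ˢ Set.Ici 0) q :=
      hasFDerivWithinAt_snd.const_add _
    have := h1.add hmul
    refine this.congr (fun y _ => ?_) ?_ <;> simp [div_eq_mul_inv]
  -- derivative of each g ρ
  set Dg : Fin M → (ℝ × ℝ) →L[ℝ] ℝ := fun ρ => (-(u ρ ^ 2)⁻¹) • Du with hDgdef
  have hDg : ∀ ρ : Fin M, HasFDerivWithinAt (fun q' => (1 / lam ρ + q'.2 + q'.1 / (l + t q'))⁻¹)
      (Dg ρ) (V ∩ Set.Ici 0 ×ˢ Set.Ici 0) q := fun ρ => invDeriv (hDu ρ) (hu ρ).ne'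
  -- sum and uniqueness
  have hsum : HasFDerivWithinAt t (∑ ρ, Dg ρ) (V ∩ Set.Ici 0 ×ˢ Set.Ici 0) q := by
    have := HasFDerivWithinAt.sum (u := Finset.univ) (fun ρ _ => hDg ρ)
    exact this.congr (fun y hy => by rw [Finset.sum_apply]; exact heq y hy) (by rw [Finset.sum_apply]; exact heq q hq)
  have hud : UniqueDiffWithinAt ℝ (V ∩ Set.Ici 0 ×ˢ Set.Ici 0) q := by
    have hconv : Convex ℝ (Set.Ici (0:ℝ) ×ˢ Set.Ici (0:ℝ)) := (convex_Ici 0).prod (convex_Ici 0)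
    have h1 : UniqueDiffWithinAt ℝ (Set.Ici (0:ℝ) ×ˢ Set.Ici (0:ℝ)) q := by
      refine uniqueDiffOn_convex hconv ?_ q hq.2
      rw [interior_prod_eq, interior_Ici]
      exact ⟨(1, 1), by norm_num, by norm_num⟩
    rw [Set.inter_comm]
    exact h1.inter (hV.mem_nhds hqV)
  have hDt_eq : Dt q = ∑ ρ, Dg ρ := hud.eq (hder q hq) hsum

  -- evaluations
  have hfin : Nonempty (Fin M) := ⟨⟨0, hM⟩⟩
  set S : ℝ := ∑ ρ, (u ρ ^ 2)⁻¹ with hSdef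
  have hS : 0 < S := Finset.sum_pos (fun ρ _ => by have := hu ρ; positivity) Finset.univ_nonempty
  set T₁ := Dt q (1, 0) with hT1def
  set T₂ := Dt q (0, 1) with hT2def
  have hDu1 : Du (1, 0) = q.1 * (-(b ^ 2)⁻¹ * T₁) + b⁻¹ := by
    simp [hDudef, hT1def]
  have hDu2 : Du (0, 1) = 1 + q.1 * (-(b ^ 2)⁻¹ * T₂) := by
    simp [hDudef, hT2def]
  have hsum_eval : ∀ w : ℝ × ℝ, (∑ ρ, Dg ρ) w = -S * Du w := by
    intro w
    rw [ContinuousLinearMap.sum_apply]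
    simp only [hDgdef, ContinuousLinearMap.smul_apply, smul_eq_mul]
    rw [← Finset.sum_mul]
    congr 1
    rw [hSdef]
    exact Finset.sum_neg_distrib _
  have e1 : T₁ = -S * (q.1 * (-(b ^ 2)⁻¹ * T₁) + b⁻¹) := by
    conv_lhs => rw [hT1def, hDt_eq]
    rw [hsum_eval, hDu1]
  have e2 : T₂ = -S * (1 + q.1 * (-(b ^ 2)⁻¹ * T₂)) := by
    conv_lhs => rw [hT2def, hDt_eq]
    rw [hsum_eval, hDu2]
  have hg1 : ∀ ρ, Dg ρ (1, 0) = -(u ρ ^ 2)⁻¹ * (q.1 * (-(b ^ 2)⁻¹ * T₁) + b⁻¹) := by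
    intro ρ
    simp only [hDgdef, ContinuousLinearMap.smul_apply, smul_eq_mul, hDu1]
  have hg2 : ∀ ρ, Dg ρ (0, 1) = -(u ρ ^ 2)⁻¹ * (1 + q.1 * (-(b ^ 2)⁻¹ * T₂)) := by
    intro ρ
    simp only [hDgdef, ContinuousLinearMap.smul_apply, smul_eq_mul, hDu2]
  set A : ℝ := S * q.1 * (b ^ 2)⁻¹ with hAdef
  clear_value A T₂ T₁ S Dg Du u b
  -- scalar algebra
  have hbinv : b * b⁻¹ = 1 := mul_inv_cancel₀ hb.ne'
  have hb2inv : b ^ 2 * (b ^ 2)⁻¹ = 1 := mul_inv_cancel₀ (pow_ne_zero 2 hb.ne')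
  have f1 : T₁ * (1 - A) = -S * b⁻¹ := by
    rw [hAdef]
    linear_combination e1
  have f2 : T₂ * (1 - A) = -S := by
    rw [hAdef]
    linear_combination e2
  have hA1 : (1 - A) ≠ 0 := by
    intro h
    rw [h, mul_zero] at f1
    have hpos : 0 < S * b⁻¹ := by positivity
    have : -S * b⁻¹ = -(S * b⁻¹) := by ring
    rw [this] at f1
    linarith
  have hbT : b * T₁ = T₂ := by
    refine mul_right_cancel₀ hA1 ?_
    rw [f2]
    linear_combination b * f1 - S * hbinv
  have hpde : T₁ = b⁻¹ * T₂ := by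
    rw [← hbT, ← mul_assoc, inv_mul_cancel₀ hb.ne', one_mul]
  have part1 : (∑ ρ, (1 / lam ρ + q.2 + q.1 / b)⁻¹) = t q := by
    rw [hbdef]; exact (heq q hq).symm
  have hcoef : (l + ∑ γ, (1 / lam γ + q.2 + q.1 / b)⁻¹)⁻¹ = b⁻¹ := by
    rw [hbdef, ← heq q hq]
  refine ⟨part1, ?_, hpde⟩
  intro ρ
  refine ⟨Dg ρ, hDg ρ, ?_⟩
  rw [hcoef, hg1 ρ, hg2 ρ, ← hbT]
  linear_combination (-(u ρ ^ 2)⁻¹ * q.1 * (b ^ 2)⁻¹ * T₁) * hbinv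
end

section
/- Fix an integer M ≥ 1, real numbers λ_1, …, λ_M > 0, and λ > 0. Let U ⊆ [0,∞) × [0,∞) be (relatively) open and let t : U → (0,∞) be differentiable and satisfy t(p,v) = Σ_{ρ=1}^M (1/λ_ρ + v + p/(λ + t(p,v)))⁻¹ on U, and set g_ρ(p,v) = (1/λ_ρ + v + p/(λ + t(p,v)))⁻¹ and γ(p,v) = Σ_ρ g_ρ(p,v)². Then for each ρ and every (p,v) ∈ U, − ∂g_ρ/∂v (p,v) = g_ρ(p,v)² · (1 − p γ(p,v)/(λ + t(p,v))²)⁻¹. Consequently, evaluating at v = 0, the mode error E_ρ = (w̄_ρ²/λ_ρ)·(−∂g_ρ/∂v)|_{v=0} equals (w̄_ρ²/λ_ρ) (1/λ_ρ + p/(λ + t(p,0)))⁻² (1 − p γ(p,0)/(λ + t(p,0))²)⁻¹, which is Proposition 3 of the paper. -/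
/-- Proposition 3 of the paper: if `t(p,v) > 0` is differentiable on a
relatively open subset `U` of `[0,∞) × [0,∞)` and satisfies the implicit equation
`t = Σ_ρ (1/λ_ρ + v + p/(λ+t))⁻¹` on `U`, then with `g_ρ = (1/λ_ρ + v + p/(λ+t))⁻¹`
and `γ = Σ_ρ g_ρ²`, each `g_ρ` is differentiable and
`−∂g_ρ/∂v = g_ρ² (1 − pγ/(λ+t)²)⁻¹`; consequently, at `v = 0`, the mode error
`E_ρ = (w̄_ρ²/λ_ρ)(−∂g_ρ/∂v)` equals
`(w̄_ρ²/λ_ρ)(1/λ_ρ + p/(λ+t))⁻²(1 − pγ/(λ+t)²)⁻¹`. -/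
theorem mode_error_formula (M : ℕ) (hM : 0 < M)
    (lam : Fin M → ℝ) (hlam : ∀ ρ, 0 < lam ρ) (l : ℝ) (hl : 0 < l)
    (U : Set (ℝ × ℝ))
    (hU : ∃ V : Set (ℝ × ℝ), IsOpen V ∧ U = V ∩ (Set.Ici 0 ×ˢ Set.Ici 0))
    (t : ℝ × ℝ → ℝ) (htpos : ∀ q ∈ U, 0 < t q)
    (heq : ∀ q ∈ U, t q = ∑ ρ, (1 / lam ρ + q.2 + q.1 / (l + t q))⁻¹)
    (Dt : ℝ × ℝ → (ℝ × ℝ) →L[ℝ] ℝ)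
    (hder : ∀ q ∈ U, HasFDerivWithinAt t (Dt q) U q) :
    ∀ q ∈ U, ∀ ρ : Fin M, ∃ Dg : (ℝ × ℝ) →L[ℝ] ℝ,
      HasFDerivWithinAt (fun q' => (1 / lam ρ + q'.2 + q'.1 / (l + t q'))⁻¹) Dg U q ∧
      -(Dg (0, 1)) =
        ((1 / lam ρ + q.2 + q.1 / (l + t q))⁻¹) ^ 2 *
          (1 - q.1 * (∑ γ, ((1 / lam γ + q.2 + q.1 / (l + t q))⁻¹) ^ 2) / (l + t q) ^ 2)⁻¹ ∧
      (q.2 = 0 → ∀ wb : ℝ,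
        (wb ^ 2 / lam ρ) * (-(Dg (0, 1))) =
          (wb ^ 2 / lam ρ) * ((1 / lam ρ + q.1 / (l + t q))⁻¹) ^ 2 *
            (1 - q.1 * (∑ γ, ((1 / lam γ + q.1 / (l + t q))⁻¹) ^ 2) / (l + t q) ^ 2)⁻¹) := by
  intro q hq ρ
  obtain ⟨V, hVopen, hUV⟩ := hU
  have hud : UniqueDiffOn ℝ U := by
    rw [hUV, Set.inter_comm]
    refine UniqueDiffOn.inter ?_ hVopen
    refine uniqueDiffOn_convex ((convex_Ici (0:ℝ)).prod (convex_Ici 0)) ?_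
    rw [interior_prod_eq, interior_Ici]
    exact ⟨(1, 1), Set.mk_mem_prod (by norm_num) (by norm_num)⟩
  have hqS : q ∈ Set.Ici (0:ℝ) ×ˢ Set.Ici (0:ℝ) := by
    rw [hUV] at hq; exact hq.2
  have hp : (0:ℝ) ≤ q.1 := hqS.1
  have hv : (0:ℝ) ≤ q.2 := hqS.2
  have hT : 0 < t q := htpos q hq
  have hL : 0 < l + t q := by linarith
  set L : ℝ := l + t q with hLdef
  have hL2 : (0:ℝ) < L ^ 2 := pow_pos hL 2
  -- values of the inner functions at q
  have hh : ∀ σ : Fin M, 0 < 1 / lam σ + q.2 + q.1 / L := fun σ => by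
    have h1 : 0 < 1 / lam σ := one_div_pos.2 (hlam σ)
    have h2 : 0 ≤ q.1 / L := div_nonneg hp hL.le
    linarith
  -- derivative of q' ↦ (l + t q')⁻¹
  have hinv : HasFDerivWithinAt (fun q' => (l + t q')⁻¹) ((-(L ^ 2)⁻¹) • Dt q) U q :=
    (hasDerivAt_inv hL.ne').comp_hasFDerivWithinAt q ((hder q hq).const_add l)
  -- derivative of q' ↦ q'.1 * (l + t q')⁻¹
  have hfrac : HasFDerivWithinAt (fun q' : ℝ × ℝ => q'.1 * (l + t q')⁻¹)
      (q.1 • ((-(L ^ 2)⁻¹) • Dt q) + L⁻¹ • ContinuousLinearMap.fst ℝ ℝ ℝ) U q :=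
    hasFDerivWithinAt_fst.mul hinv
  -- derivative of the inner function h σ (same CLM for all σ)
  set Dh : (ℝ × ℝ) →L[ℝ] ℝ :=
    ContinuousLinearMap.snd ℝ ℝ ℝ +
      (q.1 • ((-(L ^ 2)⁻¹) • Dt q) + L⁻¹ • ContinuousLinearMap.fst ℝ ℝ ℝ) with hDh
  have hhval : ∀ σ : Fin M, (1 / lam σ + q.2 + q.1 * (l + t q)⁻¹)
      = 1 / lam σ + q.2 + q.1 / L := by
    intro σ; rw [hLdef]; ring
  have hhder : ∀ σ : Fin M,
      HasFDerivWithinAt (fun q' : ℝ × ℝ => 1 / lam σ + q'.2 + q'.1 * (l + t q')⁻¹) Dh U q := by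
    intro σ
    exact (hasFDerivWithinAt_snd.const_add (1 / lam σ)).add hfrac
  -- derivative of g σ
  have hgder : ∀ σ : Fin M,
      HasFDerivWithinAt (fun q' : ℝ × ℝ => (1 / lam σ + q'.2 + q'.1 / (l + t q'))⁻¹)
        ((-( (1 / lam σ + q.2 + q.1 / L) ^ 2)⁻¹) • Dh) U q := by
    intro σ
    have h1 : HasFDerivWithinAt
        (fun q' : ℝ × ℝ => (1 / lam σ + q'.2 + q'.1 * (l + t q')⁻¹)⁻¹)
        ((-( (1 / lam σ + q.2 + q.1 / L) ^ 2)⁻¹) • Dh) U q := by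
      have := (hasDerivAt_inv (x := 1 / lam σ + q.2 + q.1 * (l + t q)⁻¹)
        (by rw [hhval σ]; exact (hh σ).ne')).comp_hasFDerivWithinAt q (hhder σ)
      rw [hhval σ] at this
      exact this
    exact h1.congr (fun x _ => rfl) rfl
  -- value of Dh at (0,1)
  set s : ℝ := Dt q (0, 1) with hsdef
  have hDh01 : Dh (0, 1) = 1 - q.1 * s / L ^ 2 := by
    simp only [hDh, ContinuousLinearMap.add_apply, ContinuousLinearMap.smul_apply,
      ContinuousLinearMap.coe_snd', ContinuousLinearMap.coe_fst', smul_eq_mul, ← hsdef]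
    ring
  -- the derivative of the sum equals Dt q by uniqueness
  have hsum : HasFDerivWithinAt t
      (∑ σ, (-( (1 / lam σ + q.2 + q.1 / L) ^ 2)⁻¹) • Dh) U q :=
    (HasFDerivWithinAt.sum (fun σ _ => hgder σ)).congr (fun x hx => by simp only [Finset.sum_apply]; exact heq x hx)
      (by simp only [Finset.sum_apply]; exact heq q hq)
  have hDteq : Dt q = ∑ σ, (-( (1 / lam σ + q.2 + q.1 / L) ^ 2)⁻¹) • Dh :=
    (hud q hq).eq (hder q hq) hsum
  -- abbreviations
  set g : Fin M → ℝ := fun σ => (1 / lam σ + q.2 + q.1 / L)⁻¹ with hg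
  set gam : ℝ := ∑ σ, g σ ^ 2 with hgam
  have hg2 : ∀ σ : Fin M, ((1 / lam σ + q.2 + q.1 / L) ^ 2)⁻¹ = g σ ^ 2 := fun σ => by
    rw [hg]; simp [inv_pow]
  -- the equation satisfied by s
  have hseq : s = -gam * (1 - q.1 * s / L ^ 2) := by
    have hthis := congrArg (fun D : (ℝ × ℝ) →L[ℝ] ℝ => D (0, 1)) hDteq
    simp only [ContinuousLinearMap.sum_apply, ContinuousLinearMap.smul_apply, hDh01,
      smul_eq_mul, ← hsdef] at hthis
    refine hthis.trans ?_
    rw [hgam, neg_mul, Finset.sum_mul, ← Finset.sum_neg_distrib]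
    refine Finset.sum_congr rfl fun σ _ => ?_
    rw [hg2 σ]; ring
  -- positivity facts
  have hgpos : ∀ σ, 0 < g σ := fun σ => inv_pos.2 (hh σ)
  have hTsum : t q = ∑ σ, g σ := heq q hq
  have hkey2 : ∀ σ, q.1 * g σ ^ 2 ≤ L * g σ := by
    intro σ
    have h1 : q.1 / L ≤ 1 / lam σ + q.2 + q.1 / L := by
      have : 0 < 1 / lam σ := one_div_pos.2 (hlam σ)
      linarith
    have h3 : q.1 ≤ L * (1 / lam σ + q.2 + q.1 / L) := by
      have h4 := mul_le_mul_of_nonneg_left h1 hL.le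
      calc q.1 = L * (q.1 / L) := by field_simp
        _ ≤ L * (1 / lam σ + q.2 + q.1 / L) := h4
    have hmul : g σ * (1 / lam σ + q.2 + q.1 / L) = 1 := inv_mul_cancel₀ (hh σ).ne'
    have h2 : q.1 * g σ ≤ L := by
      calc q.1 * g σ ≤ (L * (1 / lam σ + q.2 + q.1 / L)) * g σ :=
            mul_le_mul_of_nonneg_right h3 (hgpos σ).le
        _ = L * (g σ * (1 / lam σ + q.2 + q.1 / L)) := by ring
        _ = L := by rw [hmul, mul_one]
    calc q.1 * g σ ^ 2 = (q.1 * g σ) * g σ := by ring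
      _ ≤ L * g σ := mul_le_mul_of_nonneg_right h2 (hgpos σ).le
  have hgamle : q.1 * gam ≤ L * t q := by
    rw [hgam, hTsum, Finset.mul_sum, Finset.mul_sum]
    exact Finset.sum_le_sum fun σ _ => hkey2 σ
  have hA : 0 < 1 - q.1 * gam / L ^ 2 := by
    rw [sub_pos, div_lt_one hL2]
    have h5 : L * t q < L * L := by
      have : t q < L := by rw [hLdef]; linarith
      exact mul_lt_mul_of_pos_left this hL
    calc q.1 * gam ≤ L * t q := hgamle
      _ < L * L := h5
      _ = L ^ 2 := by ring
  set A : ℝ := 1 - q.1 * gam / L ^ 2 with hAdef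
  -- solve for s : s * A = -gam
  have hsA : s * A = -gam := by rw [hAdef]; linear_combination hseq
  have hone : (1 - q.1 * s / L ^ 2) * A = 1 := by
    linear_combination (-(q.1) / L ^ 2) * hsA + hAdef
  have hfinal : 1 - q.1 * s / L ^ 2 = A⁻¹ := eq_inv_of_mul_eq_one_left hone
  refine ⟨(-( (1 / lam ρ + q.2 + q.1 / L) ^ 2)⁻¹) • Dh, hgder ρ, ?_, ?_⟩
  · simp only [ContinuousLinearMap.smul_apply, hDh01, smul_eq_mul]
    rw [hfinal]
    simp only [inv_pow]
    ring
  · intro h0 wb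
    simp only [ContinuousLinearMap.smul_apply, hDh01, smul_eq_mul]
    rw [hfinal, hAdef, hgam]
    simp only [hg, h0, add_zero, inv_pow]
    ring
end

section
/- Fix an integer M ≥ 1, real numbers λ_1, …, λ_M > 0, and λ > 0. Suppose t : [0,∞) → (0,∞) is differentiable and satisfies t(p) = Σ_{ρ=1}^M (1/λ_ρ + p/(λ + t(p)))⁻¹ for all p ≥ 0, and set γ(p) = Σ_ρ (1/λ_ρ + p/(λ + t(p)))⁻². Then t′(p) = −(λ + t(p)) γ(p) / ((λ + t(p))² − p γ(p)) < 0 for all p ≥ 0; hence t is strictly decreasing and the map p ↦ p/(λ + t(p)) is strictly increasing. -/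
/-- if `t : [0,∞) → (0,∞)` is differentiable (with derivative `t'`) and
satisfies the implicit equation `t(p) = Σ_ρ (1/λ_ρ + p/(λ + t(p)))⁻¹` for all `p ≥ 0`,
then with `γ(p) = Σ_ρ (1/λ_ρ + p/(λ+t(p)))⁻²` one has
`t'(p) = −(λ+t(p))γ(p)/((λ+t(p))² − pγ(p)) < 0`; hence `t` is strictly decreasing on
`[0,∞)` and `p ↦ p/(λ + t(p))` is strictly increasing on `[0,∞)`. -/
theorem t_strictly_decreasing (M : ℕ) (hM : 0 < M)
    (lam : Fin M → ℝ) (hlam : ∀ ρ, 0 < lam ρ) (l : ℝ) (hl : 0 < l)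
    (t t' : ℝ → ℝ) (htpos : ∀ p ≥ (0 : ℝ), 0 < t p)
    (hder : ∀ p ≥ (0 : ℝ), HasDerivWithinAt t (t' p) (Set.Ici 0) p)
    (heq : ∀ p ≥ (0 : ℝ), t p = ∑ ρ, (1 / lam ρ + p / (l + t p))⁻¹) :
    (∀ p ≥ (0 : ℝ),
      t' p = -((l + t p) * (∑ ρ, ((1 / lam ρ + p / (l + t p))⁻¹) ^ 2) /
                ((l + t p) ^ 2 - p * ∑ ρ, ((1 / lam ρ + p / (l + t p))⁻¹) ^ 2)) ∧
      t' p < 0) ∧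
    StrictAntiOn t (Set.Ici 0) ∧
    StrictMonoOn (fun p => p / (l + t p)) (Set.Ici 0) := by
  have hNE : Nonempty (Fin M) := ⟨⟨0, hM⟩⟩
  have key : ∀ p ≥ (0 : ℝ),
      t' p = -((l + t p) * (∑ ρ, ((1 / lam ρ + p / (l + t p))⁻¹) ^ 2) /
                ((l + t p) ^ 2 - p * ∑ ρ, ((1 / lam ρ + p / (l + t p))⁻¹) ^ 2)) ∧
      t' p < 0 := by
    intro p hp
    have htp := htpos p hp
    have hcpos : 0 < l + t p := by linarith
    have hwpos : ∀ ρ : Fin M, 0 < 1 / lam ρ + p / (l + t p) := by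
      intro ρ
      have h1 : 0 < 1 / lam ρ := one_div_pos.mpr (hlam ρ)
      have h2 : 0 ≤ p / (l + t p) := div_nonneg hp hcpos.le
      linarith
    set c := l + t p with hc
    set γ := ∑ ρ, ((1 / lam ρ + p / c)⁻¹) ^ 2 with hγ
    have hγpos : 0 < γ := by
      apply Finset.sum_pos
      · intro ρ _
        exact pow_pos (inv_pos.mpr (hwpos ρ)) 2
      · exact Finset.univ_nonempty
    -- key inequality : p * γ < c ^ 2
    have hpgle : ∀ ρ : Fin M, p * ((1 / lam ρ + p / c)⁻¹) ≤ c := by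
      intro ρ
      rcases eq_or_lt_of_le hp with h0 | hppos
      · rw [← h0]; simpa using hcpos.le
      · have h1 : (1 / lam ρ + p / c)⁻¹ ≤ (p / c)⁻¹ := by
          apply inv_anti₀ (div_pos hppos hcpos)
          have : 0 < 1 / lam ρ := one_div_pos.mpr (hlam ρ)
          linarith
        have h2 : (p / c)⁻¹ = c / p := by rw [inv_div]
        calc p * (1 / lam ρ + p / c)⁻¹ ≤ p * (c / p) := by
              apply mul_le_mul_of_nonneg_left _ hp
              rw [← h2]; exact h1
          _ = c := by field_simp
    have hden : 0 < c ^ 2 - p * γ := by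
      have hsum : p * γ ≤ c * t p := by
        rw [hγ, Finset.mul_sum, heq p hp, Finset.mul_sum]
        apply Finset.sum_le_sum
        intro ρ _
        have hg := inv_pos.mpr (hwpos ρ)
        have := hpgle ρ
        calc p * ((1 / lam ρ + p / c)⁻¹) ^ 2
            = (p * (1 / lam ρ + p / c)⁻¹) * (1 / lam ρ + p / c)⁻¹ := by ring
          _ ≤ c * (1 / lam ρ + p / c)⁻¹ :=
              mul_le_mul_of_nonneg_right (hpgle ρ) hg.le
      have : c * t p < c ^ 2 := by
        have : t p < c := by rw [hc]; linarith
        nlinarith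
      linarith
    -- derivative computation
    have hdiv : HasDerivWithinAt (fun q => q / (l + t q))
        ((1 * (l + t p) - p * (t' p)) / (l + t p) ^ 2) (Set.Ici 0) p :=
      (hasDerivWithinAt_id p _).div ((hder p hp).const_add l) hcpos.ne'
    have hρ : ∀ ρ : Fin M, HasDerivWithinAt (fun q => (1 / lam ρ + q / (l + t q))⁻¹)
        (-((1 * (l + t p) - p * (t' p)) / (l + t p) ^ 2) / (1 / lam ρ + p / (l + t p)) ^ 2)
        (Set.Ici 0) p := by
      intro ρ
      exact (hdiv.const_add (1 / lam ρ)).inv (hwpos ρ).ne'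
    have hsumder : HasDerivWithinAt (fun q => ∑ ρ, (1 / lam ρ + q / (l + t q))⁻¹)
        (∑ ρ, -((1 * (l + t p) - p * (t' p)) / (l + t p) ^ 2) / (1 / lam ρ + p / (l + t p)) ^ 2)
        (Set.Ici 0) p :=
      HasDerivWithinAt.fun_sum (fun ρ _ => hρ ρ)
    have ht2 : HasDerivWithinAt t
        (∑ ρ, -((1 * (l + t p) - p * (t' p)) / (l + t p) ^ 2) / (1 / lam ρ + p / (l + t p)) ^ 2)
        (Set.Ici 0) p :=
      hsumder.congr (fun q hq => heq q hq) (heq p hp)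
    have huniq : t' p = ∑ ρ, -((1 * (l + t p) - p * (t' p)) / (l + t p) ^ 2) /
        (1 / lam ρ + p / (l + t p)) ^ 2 := by
      have h1 := (hder p hp).derivWithin (uniqueDiffOn_Ici 0 p hp)
      have h2 := ht2.derivWithin (uniqueDiffOn_Ici 0 p hp)
      rw [h1] at h2
      exact h2
    have hsum_eq : (∑ ρ, -((1 * (l + t p) - p * (t' p)) / (l + t p) ^ 2) /
        (1 / lam ρ + p / (l + t p)) ^ 2)
        = -((c - p * t' p) / c ^ 2) * γ := by
      rw [hγ, Finset.mul_sum]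
      apply Finset.sum_congr rfl
      intro ρ _
      rw [← hc, inv_pow, div_eq_mul_inv]
      ring_nf
    rw [hsum_eq] at huniq
    have hu : t' p * (c ^ 2 - p * γ) = -(c * γ) := by
      have hc2 : (c : ℝ) ^ 2 ≠ 0 := by positivity
      field_simp at huniq
      nlinarith [huniq]
    have hform : t' p = -(c * γ / (c ^ 2 - p * γ)) := by
      rw [← neg_div, eq_div_iff hden.ne']
      exact hu
    refine ⟨hform, ?_⟩
    rw [hform]
    have : 0 < c * γ / (c ^ 2 - p * γ) := by positivity
    linarith
  have hcont : ContinuousOn t (Set.Ici 0) := fun x hx => (hder x hx).continuousWithinAt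
  have hAnti : StrictAntiOn t (Set.Ici 0) := by
    apply strictAntiOn_of_deriv_neg (convex_Ici 0) hcont
    intro x hx
    rw [interior_Ici] at hx
    have hD : HasDerivAt t (t' x) x :=
      (hder x (le_of_lt hx)).hasDerivAt (Ici_mem_nhds hx)
    rw [hD.deriv]
    exact (key x (le_of_lt hx)).2
  refine ⟨key, hAnti, ?_⟩
  intro a ha b hb hab
  simp only
  have hta := htpos a ha
  have htb := htpos b hb
  have hanti : t b < t a := hAnti ha hb hab
  have h1 : a / (l + t a) ≤ a / (l + t b) := by
    apply div_le_div_of_nonneg_left ha (by linarith) (by linarith)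
  have h2 : a / (l + t b) < b / (l + t b) :=
    (div_lt_div_iff_of_pos_right (show (0:ℝ) < l + t b by linarith)).2 hab
  linarith
end

section
/- Fix an integer M ≥ 1, real numbers λ_1, …, λ_M > 0, λ > 0, and target coefficients w̄_1, …, w̄_M with w̄_ρ ≠ 0 and w̄_γ ≠ 0 for two indices ρ, γ with λ_γ > λ_ρ. Suppose t : [0,∞) → (0,∞) is differentiable and satisfies t(p) = Σ_{σ=1}^M (1/λ_σ + p/(λ + t(p)))⁻¹ for all p ≥ 0. Then the ratio of mode errors E_ρ(p)/E_γ(p) is strictly increasing in p; equivalently, d/dp log E_ρ(p) > d/dp log E_γ(p) for all p ≥ 0. In this sense each marginal training data point causes a greater percent reduction in generalization error for modes with larger kernel eigenvalues. -/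
/-- The theoretical mode error
`E_ρ(p) = (w̄_ρ²/λ_ρ) g_ρ(p)² (1 − pγ(p)/(λ+t(p))²)⁻¹` with
`g_ρ(p) = (1/λ_ρ + p/(λ+t(p)))⁻¹` and `γ(p) = Σ_σ g_σ(p)²`. -/
noncomputable def modeError {M : ℕ} (lam : Fin M → ℝ) (l : ℝ) (wbar : Fin M → ℝ)
    (t : ℝ → ℝ) (ρ : Fin M) (p : ℝ) : ℝ :=
  (wbar ρ ^ 2 / lam ρ) * ((1 / lam ρ + p / (l + t p))⁻¹) ^ 2 *
    (1 - p * (∑ σ, ((1 / lam σ + p / (l + t p))⁻¹) ^ 2) / (l + t p) ^ 2)⁻¹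

open Set Finset

/-- The common self-consistency denominator. -/
noncomputable def Dfun {M : ℕ} (lam : Fin M → ℝ) (l : ℝ) (t : ℝ → ℝ) (q : ℝ) : ℝ :=
  1 - q * (∑ σ, ((1 / lam σ + q / (l + t q))⁻¹) ^ 2) / (l + t q) ^ 2

lemma modeError_eq {M : ℕ} (lam : Fin M → ℝ) (l : ℝ) (wbar : Fin M → ℝ)
    (t : ℝ → ℝ) (ρ : Fin M) (p : ℝ) :
    modeError lam l wbar t ρ p
      = (wbar ρ ^ 2 / lam ρ) * ((1 / lam ρ + p / (l + t p))⁻¹) ^ 2 *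
        (Dfun lam l t p)⁻¹ := rfl

lemma aux_term_mono {c x y : ℝ} (hc : 0 < c) (hx : 0 ≤ x) (hxy : x ≤ y) :
    x / (c + x) ≤ y / (c + y) := by
  have hy : 0 ≤ y := le_trans hx hxy
  rw [div_le_div_iff₀ (by linarith) (by linarith)]
  nlinarith

lemma aux_kappa_mono {M : ℕ} (lam : Fin M → ℝ) (hlam : ∀ σ, 0 < lam σ) (l : ℝ) (hl : 0 < l)
    (t : ℝ → ℝ) (htpos : ∀ p ≥ (0:ℝ), 0 < t p)
    (heq : ∀ p ≥ (0:ℝ), t p = ∑ σ, (1 / lam σ + p / (l + t p))⁻¹)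
    {p q : ℝ} (hp : 0 ≤ p) (hq : 0 ≤ q) (hpq : p < q) :
    p / (l + t p) < q / (l + t q) := by
  have hAp : 0 < l + t p := by have := htpos p hp; linarith
  have hAq : 0 < l + t q := by have := htpos q hq; linarith
  have hep := heq p hp
  have heq' := heq q hq
  by_contra h
  push_neg at h
  set κp := p / (l + t p) with hκp
  set κq := q / (l + t q) with hκq
  have hκq0 : 0 ≤ κq := div_nonneg hq hAq.le
  have hκp0 : 0 ≤ κp := le_trans hκq0 h
  have hidp : p = κp * l + ∑ σ, κp / (1 / lam σ + κp) := by
    have h1 : p = κp * (l + t p) := by rw [hκp]; field_simp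
    rw [hep] at h1
    rw [h1, mul_add, Finset.mul_sum]
    simp [div_eq_mul_inv]
  have hidq : q = κq * l + ∑ σ, κq / (1 / lam σ + κq) := by
    have h1 : q = κq * (l + t q) := by rw [hκq]; field_simp
    rw [heq'] at h1
    rw [h1, mul_add, Finset.mul_sum]
    simp [div_eq_mul_inv]
  have hle : q ≤ p := by
    rw [hidp, hidq]
    have h1 : κq * l ≤ κp * l := mul_le_mul_of_nonneg_right h hl.le
    have h2 : ∑ σ, κq / (1 / lam σ + κq) ≤ ∑ σ, κp / (1 / lam σ + κp) :=
      Finset.sum_le_sum (fun σ _ => aux_term_mono (by have := hlam σ; positivity) hκq0 h)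
    linarith
  linarith

lemma aux_D_pos {M : ℕ} (lam : Fin M → ℝ) (hlam : ∀ σ, 0 < lam σ) (l : ℝ) (hl : 0 < l)
    (t : ℝ → ℝ) (htpos : ∀ p ≥ (0:ℝ), 0 < t p)
    (heq : ∀ p ≥ (0:ℝ), t p = ∑ σ, (1 / lam σ + p / (l + t p))⁻¹)
    {p : ℝ} (hp : 0 ≤ p) :
    0 < Dfun lam l t p := by
  have htp := htpos p hp
  have hA : 0 < l + t p := by linarith
  have hep := heq p hp
  rw [Dfun]
  set κ := p / (l + t p) with hκ
  have hκ0 : 0 ≤ κ := div_nonneg hp hA.le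
  have hterm : ∀ σ : Fin M, κ * ((1 / lam σ + κ)⁻¹) ^ 2 ≤ (1 / lam σ + κ)⁻¹ := by
    intro σ
    have hc : 0 < 1 / lam σ + κ := by have := hlam σ; positivity
    have h1 : κ * (1 / lam σ + κ)⁻¹ ≤ 1 := by
      rw [← div_eq_mul_inv, div_le_one hc]; linarith [one_div_pos.mpr (hlam σ)]
    calc κ * ((1 / lam σ + κ)⁻¹) ^ 2 = (κ * (1 / lam σ + κ)⁻¹) * (1 / lam σ + κ)⁻¹ := by ring
      _ ≤ 1 * (1 / lam σ + κ)⁻¹ := mul_le_mul_of_nonneg_right h1 (inv_nonneg.mpr hc.le)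
      _ = (1 / lam σ + κ)⁻¹ := one_mul _
  have hsum : κ * (∑ σ, ((1 / lam σ + κ)⁻¹) ^ 2) ≤ t p := by
    rw [Finset.mul_sum, hep]
    exact Finset.sum_le_sum (fun σ _ => hterm σ)
  set S := ∑ σ, ((1 / lam σ + κ)⁻¹) ^ 2 with hS
  have hmain : p * S / (l + t p) ^ 2 = κ * S / (l + t p) := by
    rw [hκ, div_mul_eq_mul_div, div_div, ← sq]
  rw [hmain]
  have : κ * S / (l + t p) < 1 := by
    rw [div_lt_one hA]; linarith
  linarith

lemma aux_ratio {M : ℕ} (lam : Fin M → ℝ) (hlam : ∀ σ, 0 < lam σ) (l : ℝ) (hl : 0 < l)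
    (wbar : Fin M → ℝ) (ρ γ : Fin M) (hwγ : wbar γ ≠ 0)
    (t : ℝ → ℝ) (htpos : ∀ p ≥ (0:ℝ), 0 < t p)
    (heq : ∀ p ≥ (0:ℝ), t p = ∑ σ, (1 / lam σ + p / (l + t p))⁻¹)
    {p : ℝ} (hp : 0 ≤ p) :
    modeError lam l wbar t ρ p / modeError lam l wbar t γ p
      = ((wbar ρ ^ 2 / lam ρ) * (lam γ / wbar γ ^ 2)) *
        ((1 / lam γ + p / (l + t p)) / (1 / lam ρ + p / (l + t p))) ^ 2 := by
  have htp := htpos p hp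
  have hA : 0 < l + t p := by linarith
  have hκ0 : 0 ≤ p / (l + t p) := div_nonneg hp hA.le
  have hcρ : 0 < 1 / lam ρ + p / (l + t p) := by have := hlam ρ; positivity
  have hcγ : 0 < 1 / lam γ + p / (l + t p) := by have := hlam γ; positivity
  have hD := aux_D_pos lam hlam l hl t htpos heq hp
  have hlρ := hlam ρ
  have hlγ := hlam γ
  rw [modeError_eq, modeError_eq]
  set x := 1 / lam ρ + p / (l + t p) with hx
  set y := 1 / lam γ + p / (l + t p) with hy
  set D := Dfun lam l t p with hDset
  have hwγ2 : (0:ℝ) < wbar γ ^ 2 := by positivity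
  field_simp

/-- for two modes `ρ, γ` with `λ_γ > λ_ρ` and nonzero target coefficients,
the ratio `E_ρ(p)/E_γ(p)` is strictly increasing in `p`; equivalently
`d/dp log E_ρ(p) > d/dp log E_γ(p)` for all `p ≥ 0`: the marginal training point
causes a greater percent reduction of the error of modes with larger eigenvalues. -/
theorem mode_error_ratio_increasing (M : ℕ) (hM : 0 < M)
    (lam : Fin M → ℝ) (hlam : ∀ σ, 0 < lam σ) (l : ℝ) (hl : 0 < l)
    (wbar : Fin M → ℝ) (ρ γ : Fin M) (hργ : lam ρ < lam γ)
    (hwρ : wbar ρ ≠ 0) (hwγ : wbar γ ≠ 0)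
    (t t' : ℝ → ℝ) (htpos : ∀ p ≥ (0 : ℝ), 0 < t p)
    (hder : ∀ p ≥ (0 : ℝ), HasDerivWithinAt t (t' p) (Set.Ici 0) p)
    (heq : ∀ p ≥ (0 : ℝ), t p = ∑ σ, (1 / lam σ + p / (l + t p))⁻¹) :
    StrictMonoOn (fun p => modeError lam l wbar t ρ p / modeError lam l wbar t γ p)
      (Set.Ici 0) ∧
    ∀ p ≥ (0 : ℝ), ∃ dρ dγ : ℝ,
      HasDerivWithinAt (fun q => Real.log (modeError lam l wbar t ρ q)) dρ (Set.Ici 0) p ∧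
      HasDerivWithinAt (fun q => Real.log (modeError lam l wbar t γ q)) dγ (Set.Ici 0) p ∧
      dγ < dρ := by
  have hinv : 1 / lam γ < 1 / lam ρ := one_div_lt_one_div_of_lt (hlam ρ) hργ
  constructor
  · intro a ha b hb hab
    simp only [Set.mem_Ici] at ha hb
    have hta := htpos a ha
    have htb := htpos b hb
    have hAa : 0 < l + t a := by linarith
    have hAb : 0 < l + t b := by linarith
    have hκa : 0 ≤ a / (l + t a) := div_nonneg ha hAa.le
    have hκb : 0 ≤ b / (l + t b) := div_nonneg hb hAb.le
    have hk := aux_kappa_mono lam hlam l hl t htpos heq ha hb hab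
    simp only
    rw [aux_ratio lam hlam l hl wbar ρ γ hwγ t htpos heq ha,
        aux_ratio lam hlam l hl wbar ρ γ hwγ t htpos heq hb]
    have hC : 0 < (wbar ρ ^ 2 / lam ρ) * (lam γ / wbar γ ^ 2) := by
      have := hlam ρ; have := hlam γ; positivity
    apply mul_lt_mul_of_pos_left _ hC
    have hcρa : 0 < 1 / lam ρ + a / (l + t a) := by have := hlam ρ; positivity
    have hcρb : 0 < 1 / lam ρ + b / (l + t b) := by have := hlam ρ; positivity
    have hcγa : 0 < 1 / lam γ + a / (l + t a) := by have := hlam γ; positivity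
    have hstep : (1 / lam γ + a / (l + t a)) / (1 / lam ρ + a / (l + t a))
        < (1 / lam γ + b / (l + t b)) / (1 / lam ρ + b / (l + t b)) := by
      rw [div_lt_div_iff₀ hcρa hcρb]
      nlinarith [mul_lt_mul_of_pos_right hinv (sub_pos.mpr hk)]
    have hnn : 0 ≤ (1 / lam γ + a / (l + t a)) / (1 / lam ρ + a / (l + t a)) :=
      le_of_lt (div_pos hcγa hcρa)
    exact pow_lt_pow_left₀ hstep hnn (by norm_num)
  · intro p hp
    have htp := htpos p hp
    have hA : 0 < l + t p := by linarith
    have hAne : l + t p ≠ 0 := hA.ne'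
    have hκ0 : 0 ≤ p / (l + t p) := div_nonneg hp hA.le
    have hdt := hder p hp
    -- derivative of κ : q ↦ q / (l + t q)
    set k' : ℝ := (l + t p - p * t' p) / (l + t p) ^ 2 with hk'def
    have hκd : HasDerivWithinAt (fun q => q / (l + t q)) k' (Set.Ici 0) p := by
      have h := (hasDerivWithinAt_id p (Set.Ici 0)).div
        ((hasDerivWithinAt_const p (Set.Ici 0) l).add hdt) hAne
      exact (by simpa [hk'def] using h : HasDerivWithinAt (id / ((fun _ => l) + t)) k' (Set.Ici 0) p)
    -- derivative of F at κ p
    set B : ℝ := ∑ σ, ((1 / lam σ + p / (l + t p))⁻¹) ^ 2 with hBdef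
    have hcσ : ∀ σ : Fin M, 0 < 1 / lam σ + p / (l + t p) := by
      intro σ; have := hlam σ; positivity
    have hF : HasDerivAt (fun x : ℝ => ∑ σ, (1 / lam σ + x)⁻¹) (-B) (p / (l + t p)) := by
      have hterm : ∀ σ : Fin M, HasDerivAt (fun x : ℝ => (1 / lam σ + x)⁻¹)
          (-(((1 / lam σ + p / (l + t p))⁻¹) ^ 2)) (p / (l + t p)) := by
        intro σ
        have h := ((hasDerivAt_id (p / (l + t p))).const_add (1 / lam σ)).inv (hcσ σ).ne'
        exact (show HasDerivAt (fun x : ℝ => (1 / lam σ + x)⁻¹) (-1 / (1 / lam σ + p / (l + t p)) ^ 2) (p / (l + t p)) from h).congr_deriv (by rw [neg_div, one_div, inv_pow])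
      have hsum := HasDerivAt.fun_sum (fun σ (_ : σ ∈ Finset.univ) => hterm σ)
      simpa [hBdef] using hsum
    have hFκ : HasDerivWithinAt (fun q => ∑ σ, (1 / lam σ + q / (l + t q))⁻¹)
        (-B * k') (Set.Ici 0) p := by
      have h := hF.comp_hasDerivWithinAt p hκd
      simpa [Function.comp_def] using h
    have ht2 : HasDerivWithinAt t (-B * k') (Set.Ici 0) p :=
      hFκ.congr (fun q hq => heq q hq) (heq p hp)
    have huniq : t' p = -B * k' := by
      have h1 := hdt.derivWithin (uniqueDiffOn_Ici (0:ℝ) p hp)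
      have h2 := ht2.derivWithin (uniqueDiffOn_Ici (0:ℝ) p hp)
      rw [← h1, ← h2]
    -- positivity of k'
    have hDp : 0 < Dfun lam l t p := aux_D_pos lam hlam l hl t htpos heq hp
    have hBpos : 0 ≤ B := by
      rw [hBdef]; positivity
    have hA2 : 0 < (l + t p) ^ 2 := by positivity
    have hpB : p * B < (l + t p) ^ 2 := by
      have h3 : p * B / (l + t p) ^ 2 < 1 := by
        have := hDp; rw [Dfun] at this; linarith
      exact (div_lt_one hA2).mp h3
    have e1 : k' * (l + t p) ^ 2 = l + t p - p * t' p := by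
      rw [hk'def]; field_simp
    have e2 : k' * ((l + t p) ^ 2 - p * B) = l + t p := by
      rw [huniq] at e1; linear_combination e1
    have hk'pos : 0 < k' := by
      by_contra hcon
      push_neg at hcon
      nlinarith
    -- derivative of D
    have hκdiff : DifferentiableWithinAt ℝ (fun q => q / (l + t q)) (Set.Ici 0) p :=
      hκd.differentiableWithinAt
    have hsumdiff : DifferentiableWithinAt ℝ
        (fun q => ∑ σ, ((1 / lam σ + q / (l + t q))⁻¹) ^ 2) (Set.Ici 0) p := by
      apply DifferentiableWithinAt.fun_sum
      intro σ _
      exact (((differentiableWithinAt_const _).add hκdiff).inv (hcσ σ).ne').pow 2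
    have hA2diff : DifferentiableWithinAt ℝ (fun q => (l + t q) ^ 2) (Set.Ici 0) p :=
      ((differentiableWithinAt_const _).add hdt.differentiableWithinAt).pow 2
    have hDdiff : DifferentiableWithinAt ℝ (Dfun lam l t) (Set.Ici 0) p := by
      apply DifferentiableWithinAt.sub (differentiableWithinAt_const 1)
      exact (DifferentiableWithinAt.mul (differentiableAt_id.differentiableWithinAt) hsumdiff).div hA2diff (pow_ne_zero 2 hAne)
    set d' : ℝ := derivWithin (Dfun lam l t) (Set.Ici 0) p with hd'def
    have hDd : HasDerivWithinAt (Dfun lam l t) d' (Set.Ici 0) p := hDdiff.hasDerivWithinAt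
    -- log decomposition
    have hlogE : ∀ τ : Fin M, wbar τ ≠ 0 → ∀ q ∈ Set.Ici (0:ℝ),
        Real.log (modeError lam l wbar t τ q)
          = Real.log (wbar τ ^ 2 / lam τ) - 2 * Real.log (1 / lam τ + q / (l + t q))
            - Real.log (Dfun lam l t q) := by
      intro τ hwτ q hq
      simp only [Set.mem_Ici] at hq
      have htq := htpos q hq
      have hAq : 0 < l + t q := by linarith
      have hκq : 0 ≤ q / (l + t q) := div_nonneg hq hAq.le
      have hcτ : 0 < 1 / lam τ + q / (l + t q) := by have := hlam τ; positivity
      have hDq : 0 < Dfun lam l t q := aux_D_pos lam hlam l hl t htpos heq hq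
      have hlτ := hlam τ
      rw [modeError_eq]
      rw [Real.log_mul (by positivity) (by positivity),
          Real.log_mul (by positivity) (by positivity),
          Real.log_inv, Real.log_pow, Real.log_inv]
      push_cast
      ring
    -- derivative of each log
    have hlogd : ∀ τ : Fin M, wbar τ ≠ 0 →
        HasDerivWithinAt (fun q => Real.log (modeError lam l wbar t τ q))
          (0 - 2 * (k' / (1 / lam τ + p / (l + t p))) - d' / Dfun lam l t p)
          (Set.Ici 0) p := by
      intro τ hwτ
      have h1 : HasDerivWithinAt (fun q => Real.log (1 / lam τ + q / (l + t q)))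
          (k' / (1 / lam τ + p / (l + t p))) (Set.Ici 0) p := by
        have h := ((hκd.const_add (1 / lam τ)).log (hcσ τ).ne')
        simpa using h
      have h2 : HasDerivWithinAt (fun q => Real.log (Dfun lam l t q))
          (d' / Dfun lam l t p) (Set.Ici 0) p := hDd.log hDp.ne'
      have h3 := ((hasDerivWithinAt_const p (Set.Ici 0)
          (Real.log (wbar τ ^ 2 / lam τ))).sub (h1.const_mul 2)).sub h2
      exact h3.congr (fun q hq => hlogE τ hwτ q hq) (hlogE τ hwτ p hp)
    refine ⟨_, _, hlogd ρ hwρ, hlogd γ hwγ, ?_⟩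
    have hdiv : k' / (1 / lam ρ + p / (l + t p)) < k' / (1 / lam γ + p / (l + t p)) := by
      apply div_lt_div_of_pos_left hk'pos (hcσ γ)
      linarith
    linarith
end

section
/- Fix an integer M ≥ 1, real numbers λ_1, …, λ_M > 0, λ > 0, and target coefficients w̄_1, …, w̄_M ∈ ℝ, and for each p ≥ 0 let t(p) > 0 be the unique solution of the implicit equation. Then, as p → ∞: t(p) → 0, p γ(p)/(λ + t(p))² → 0, and for each mode ρ, p² E_ρ(p) → λ² w̄_ρ²/λ_ρ; in particular every mode error decays asymptotically like p⁻². Consequently, for any modes ρ, γ with w̄_γ ≠ 0, the error ratio satisfies E_ρ(p)/E_γ(p) → (w̄_ρ²/λ_ρ)/(w̄_γ²/λ_γ) as p → ∞. -/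
open Filter

/-- along the positive solution `t(p)` of the implicit equation, as
`p → ∞`: `t(p) → 0`, `pγ(p)/(λ+t(p))² → 0`, `p²E_ρ(p) → λ²w̄_ρ²/λ_ρ` for each mode
(so every mode error decays like `p⁻²`), and `E_ρ(p)/E_γ(p) → (w̄_ρ²/λ_ρ)/(w̄_γ²/λ_γ)`
whenever `w̄_γ ≠ 0`. -/
theorem mode_error_asymptotics (M : ℕ) (hM : 0 < M)
    (lam : Fin M → ℝ) (hlam : ∀ ρ, 0 < lam ρ) (l : ℝ) (hl : 0 < l)
    (wbar : Fin M → ℝ) (t : ℝ → ℝ)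
    (htpos : ∀ p ≥ (0 : ℝ), 0 < t p)
    (heq : ∀ p ≥ (0 : ℝ), t p = ∑ ρ, (1 / lam ρ + p / (l + t p))⁻¹) :
    Tendsto t atTop (nhds 0) ∧
    Tendsto (fun p => p * (∑ σ, ((1 / lam σ + p / (l + t p))⁻¹) ^ 2) / (l + t p) ^ 2)
      atTop (nhds 0) ∧
    (∀ ρ : Fin M,
      Tendsto (fun p => p ^ 2 * modeError lam l wbar t ρ p) atTop
        (nhds (l ^ 2 * wbar ρ ^ 2 / lam ρ))) ∧
    (∀ ρ γ : Fin M, wbar γ ≠ 0 →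
      Tendsto (fun p => modeError lam l wbar t ρ p / modeError lam l wbar t γ p) atTop
        (nhds ((wbar ρ ^ 2 / lam ρ) / (wbar γ ^ 2 / lam γ)))) := by
  set C : ℝ := ∑ ρ, lam ρ with hCdef
  have hltpos : ∀ p ≥ (0 : ℝ), 0 < l + t p := fun p hp => by
    have := htpos p hp; linarith
  -- upper bound: t p ≤ C for p ≥ 0
  have hC : ∀ p ≥ (0 : ℝ), t p ≤ C := by
    intro p hp
    rw [heq p hp]
    apply Finset.sum_le_sum
    intro ρ _
    have h1 : (lam ρ)⁻¹ ≤ 1 / lam ρ + p / (l + t p) := by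
      have : 0 ≤ p / (l + t p) := div_nonneg hp (hltpos p hp).le
      rw [one_div] at *; linarith
    calc (1 / lam ρ + p / (l + t p))⁻¹ ≤ ((lam ρ)⁻¹)⁻¹ :=
          inv_anti₀ (inv_pos.mpr (hlam ρ)) h1
      _ = lam ρ := inv_inv _
  -- t p ≤ M (l + C) / p for p ≥ 1
  have hbound : ∀ p ≥ (1 : ℝ), t p ≤ (M : ℝ) * (l + C) / p := by
    intro p hp
    have hp0 : (0 : ℝ) < p := by linarith
    have hlt := hltpos p hp0.le
    have hterm : ∀ ρ : Fin M, (1 / lam ρ + p / (l + t p))⁻¹ ≤ (l + C) / p := by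
      intro ρ
      have h1 : p / (l + t p) ≤ 1 / lam ρ + p / (l + t p) := by
        have : 0 < 1 / lam ρ := one_div_pos.mpr (hlam ρ)
        linarith
      have h2 : (1 / lam ρ + p / (l + t p))⁻¹ ≤ (p / (l + t p))⁻¹ :=
        inv_anti₀ (div_pos hp0 hlt) h1
      rw [inv_div] at h2
      refine h2.trans ?_
      gcongr
      exact hC p hp0.le
    calc t p = ∑ ρ, (1 / lam ρ + p / (l + t p))⁻¹ := heq p hp0.le
      _ ≤ ∑ _ρ : Fin M, (l + C) / p := Finset.sum_le_sum fun ρ _ => hterm ρ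
      _ = (M : ℝ) * ((l + C) / p) := by
          simp [Finset.sum_const, Finset.card_univ]
      _ = (M : ℝ) * (l + C) / p := by ring
  -- t → 0
  have ht0 : Tendsto t atTop (nhds 0) := by
    have hup : Tendsto (fun p : ℝ => (M : ℝ) * (l + C) / p) atTop (nhds 0) :=
      Tendsto.div_atTop tendsto_const_nhds tendsto_id
    refine tendsto_of_tendsto_of_tendsto_of_le_of_le' tendsto_const_nhds hup ?_ ?_
    · filter_upwards [eventually_ge_atTop (0 : ℝ)] with p hp
      exact (htpos p hp).le
    · filter_upwards [eventually_ge_atTop (1 : ℝ)] with p hp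
      exact hbound p hp
  have hlt : Tendsto (fun p => l + t p) atTop (nhds l) := by
    have := ht0.const_add l
    simpa using this
  -- p * g σ p → l
  have hpg : ∀ σ : Fin M,
      Tendsto (fun p => p * (1 / lam σ + p / (l + t p))⁻¹) atTop (nhds l) := by
    intro σ
    have h1 : Tendsto (fun p => (1 / lam σ) * p⁻¹ + (l + t p)⁻¹) atTop (nhds l⁻¹) := by
      have := (tendsto_inv_atTop_zero.const_mul (1 / lam σ)).add (hlt.inv₀ hl.ne')
      simpa using this
    have h2 := h1.inv₀ (inv_ne_zero hl.ne')
    rw [inv_inv] at h2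
    refine h2.congr' ?_
    filter_upwards [eventually_ge_atTop (1 : ℝ)] with p hp
    have hp0 : (0 : ℝ) < p := by linarith
    have hltp := hltpos p hp0.le
    have hlamσ := hlam σ
    have hrw : 1 / lam σ * p⁻¹ + (l + t p)⁻¹ = (1 / lam σ + p / (l + t p)) / p := by
      field_simp
    rw [hrw, inv_div, div_eq_mul_inv]
  -- the normalization factor A p → 0
  set A : ℝ → ℝ := fun p =>
    p * (∑ σ, ((1 / lam σ + p / (l + t p))⁻¹) ^ 2) / (l + t p) ^ 2 with hAdef
  have hA : Tendsto A atTop (nhds 0) := by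
    have hsum : Tendsto (fun p => ∑ σ, (p * (1 / lam σ + p / (l + t p))⁻¹) ^ 2)
        atTop (nhds (∑ _σ : Fin M, l ^ 2)) :=
      tendsto_finset_sum _ fun σ _ => (hpg σ).pow 2
    have h1 : Tendsto (fun p =>
        (∑ σ, (p * (1 / lam σ + p / (l + t p))⁻¹) ^ 2) * p⁻¹ / (l + t p) ^ 2)
        atTop (nhds 0) := by
      have := (hsum.mul tendsto_inv_atTop_zero).div (hlt.pow 2)
        (pow_ne_zero 2 hl.ne')
      simpa [Pi.div_def] using this
    refine h1.congr' ?_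
    filter_upwards [eventually_ge_atTop (1 : ℝ)] with p hp
    have hp0 : (0 : ℝ) < p := by linarith
    simp only [hAdef]
    congr 1
    simp only [mul_pow, ← Finset.mul_sum]
    field_simp
  -- third statement
  have h3 : ∀ ρ : Fin M,
      Tendsto (fun p => p ^ 2 * modeError lam l wbar t ρ p) atTop
        (nhds (l ^ 2 * wbar ρ ^ 2 / lam ρ)) := by
    intro ρ
    have h1 : Tendsto (fun p =>
        (wbar ρ ^ 2 / lam ρ) * (p * (1 / lam ρ + p / (l + t p))⁻¹) ^ 2 * (1 - A p)⁻¹)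
        atTop (nhds ((wbar ρ ^ 2 / lam ρ) * l ^ 2 * (1 - 0)⁻¹)) :=
      (tendsto_const_nhds.mul ((hpg ρ).pow 2)).mul
        ((tendsto_const_nhds.sub hA).inv₀ (by norm_num))
    have h2 : ((wbar ρ ^ 2 / lam ρ) * l ^ 2 * (1 - (0:ℝ))⁻¹)
        = l ^ 2 * wbar ρ ^ 2 / lam ρ := by
      norm_num; ring
    rw [h2] at h1
    refine h1.congr fun p => ?_
    simp only [modeError, hAdef]
    ring
  refine ⟨ht0, hA, h3, ?_⟩
  intro ρ γ hwγ
  have hden : l ^ 2 * wbar γ ^ 2 / lam γ ≠ 0 :=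
    div_ne_zero (mul_ne_zero (pow_ne_zero 2 hl.ne') (pow_ne_zero 2 hwγ)) (hlam γ).ne'
  have h4 := (h3 ρ).div (h3 γ) hden
  have h5 : (l ^ 2 * wbar ρ ^ 2 / lam ρ) / (l ^ 2 * wbar γ ^ 2 / lam γ)
      = (wbar ρ ^ 2 / lam ρ) / (wbar γ ^ 2 / lam γ) := by
    have ha := (hlam ρ).ne'
    have hb := (hlam γ).ne'
    have hc := hl.ne'
    have hw := pow_ne_zero 2 hwγ
    field_simp
  rw [h5] at h4
  refine h4.congr' ?_
  filter_upwards [eventually_ge_atTop (1 : ℝ)] with p hp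
  have hp0 : (0 : ℝ) < p := by linarith
  simp only [Pi.div_apply]
  rw [mul_div_mul_left _ _ (pow_ne_zero 2 hp0.ne')]
end

section
/- Fix an integer M ≥ 1, real numbers λ_1, …, λ_M > 0, and λ > 0, and for each p ≥ 0 let t(p) > 0 be the unique solution of the implicit equation t = Σ_{ρ=1}^M (1/λ_ρ + p/(λ + t))⁻¹. Then, as p → ∞, t(p) → 0, for each ρ the scaled diagonal resolvent entry satisfies p · g_ρ(p) → λ, and consequently p · t(p) → M λ. -/
open Filter

/-- along the positive solution `t(p)` of the implicit learning-curve
equation, as `p → ∞`: `t(p) → 0`, the scaled diagonal resolvent entries satisfy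
`p · g_ρ(p) → λ` with `g_ρ(p) = (1/λ_ρ + p/(λ + t(p)))⁻¹`, and `p · t(p) → Mλ`. -/
theorem resolvent_asymptotics (M : ℕ) (hM : 0 < M)
    (lam : Fin M → ℝ) (hlam : ∀ ρ, 0 < lam ρ) (l : ℝ) (hl : 0 < l)
    (t : ℝ → ℝ) (htpos : ∀ p ≥ (0 : ℝ), 0 < t p)
    (heq : ∀ p ≥ (0 : ℝ), t p = ∑ ρ, (1 / lam ρ + p / (l + t p))⁻¹) :
    Tendsto t atTop (nhds 0) ∧
    (∀ ρ : Fin M,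
      Tendsto (fun p => p * (1 / lam ρ + p / (l + t p))⁻¹) atTop (nhds l)) ∧
    Tendsto (fun p => p * t p) atTop (nhds ((M : ℝ) * l)) := by
  set C := ∑ ρ, lam ρ with hC
  have hCpos : 0 < C := Finset.sum_pos (fun ρ _ => hlam ρ) ⟨⟨0, hM⟩, Finset.mem_univ _⟩
  have hlt : ∀ p ≥ (0 : ℝ), 0 < l + t p := fun p hp => add_pos hl (htpos p hp)
  -- t p ≤ C for p ≥ 0
  have hbC : ∀ p ≥ (0 : ℝ), t p ≤ C := by
    intro p hp
    rw [heq p hp, hC]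
    apply Finset.sum_le_sum
    intro ρ _
    have h1 : (1 : ℝ) / lam ρ ≤ 1 / lam ρ + p / (l + t p) :=
      le_add_of_nonneg_right (div_nonneg hp (hlt p hp).le)
    have hρ := hlam ρ
    have h2 : (1 / lam ρ + p / (l + t p))⁻¹ ≤ ((1 : ℝ) / lam ρ)⁻¹ := by
      apply inv_anti₀ _ h1
      positivity
    simpa using h2
  -- t p ≤ M * (l + C) / p for p > 0
  have hbound : ∀ p > (0 : ℝ), t p ≤ M * ((l + C) / p) := by
    intro p hp
    rw [heq p hp.le]
    have step : ∀ ρ : Fin M, (1 / lam ρ + p / (l + t p))⁻¹ ≤ (l + C) / p := by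
      intro ρ
      have hpl : 0 < l + t p := hlt p hp.le
      have hρ := hlam ρ
      have h1 : p / (l + t p) ≤ 1 / lam ρ + p / (l + t p) :=
        le_add_of_nonneg_left (by positivity)
      have h2 : (1 / lam ρ + p / (l + t p))⁻¹ ≤ (p / (l + t p))⁻¹ := by
        apply inv_anti₀ _ h1
        positivity
      have h3 : (p / (l + t p))⁻¹ = (l + t p) / p := inv_div p (l + t p)
      have h4 : (l + t p) / p ≤ (l + C) / p := by
        gcongr
        linarith [hbC p hp.le]
      calc (1 / lam ρ + p / (l + t p))⁻¹ ≤ (p / (l + t p))⁻¹ := h2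
        _ = (l + t p) / p := h3
        _ ≤ (l + C) / p := h4
    calc ∑ ρ, (1 / lam ρ + p / (l + t p))⁻¹ ≤ ∑ _ρ : Fin M, (l + C) / p :=
          Finset.sum_le_sum (fun ρ _ => step ρ)
      _ = M * ((l + C) / p) := by
          simp [Finset.sum_const, Finset.card_univ, nsmul_eq_mul]
  -- t → 0
  have ht0 : Tendsto t atTop (nhds 0) := by
    have hup : Tendsto (fun p : ℝ => (M : ℝ) * ((l + C) / p)) atTop (nhds 0) := by
      have : Tendsto (fun p : ℝ => (l + C) / p) atTop (nhds 0) :=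
        tendsto_const_nhds.div_atTop tendsto_id
      simpa using this.const_mul (M : ℝ)
    apply tendsto_of_tendsto_of_tendsto_of_le_of_le' tendsto_const_nhds hup
    · filter_upwards [eventually_ge_atTop (0 : ℝ)] with p hp
      exact (htpos p hp).le
    · filter_upwards [eventually_gt_atTop (0 : ℝ)] with p hp
      exact hbound p hp
  have hltlim : Tendsto (fun p => l + t p) atTop (nhds l) := by
    simpa using tendsto_const_nhds.add ht0
  -- each mode
  have hg : ∀ ρ : Fin M,
      Tendsto (fun p => p * (1 / lam ρ + p / (l + t p))⁻¹) atTop (nhds l) := by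
    intro ρ
    have hinner : Tendsto (fun p : ℝ => (p * lam ρ)⁻¹ + (l + t p)⁻¹) atTop
        (nhds (0 + l⁻¹)) := by
      apply Tendsto.add
      · exact (tendsto_id.atTop_mul_const (hlam ρ)).inv_tendsto_atTop
      · exact hltlim.inv₀ hl.ne'
    have hinv : Tendsto (fun p : ℝ => ((p * lam ρ)⁻¹ + (l + t p)⁻¹)⁻¹) atTop
        (nhds l) := by
      have h0 : (0 : ℝ) + l⁻¹ ≠ 0 := by positivity
      have := hinner.inv₀ h0
      simpa using this
    apply hinv.congr'
    filter_upwards [eventually_gt_atTop (0 : ℝ)] with p hp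
    have hpl : 0 < l + t p := hlt p hp.le
    have hlρ := hlam ρ
    field_simp
  refine ⟨ht0, hg, ?_⟩
  have hsum : Tendsto (fun p => ∑ ρ, p * (1 / lam ρ + p / (l + t p))⁻¹) atTop
      (nhds (∑ _ρ : Fin M, l)) := tendsto_finset_sum _ (fun ρ _ => hg ρ)
  have hsl : (∑ _ρ : Fin M, l) = (M : ℝ) * l := by
    simp [Finset.sum_const, Finset.card_univ, nsmul_eq_mul]
  rw [← hsl]
  apply hsum.congr'
  filter_upwards [eventually_ge_atTop (0 : ℝ)] with p hp
  rw [← Finset.mul_sum, ← heq p hp]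
end

section
/- Let a, b be real numbers with b > 0, a > 1, and a − 1 < 2b. For s > 0 define I(s) = ∫₁^∞ ρ^{−a} (1 + s ρ^{−b})^{−2} dρ. Then the integral C = ∫₀^∞ u^{−a}(1 + u^{−b})^{−2} du is finite, and lim_{s→∞} s^{(a−1)/b} · I(s) = C. In particular, I(s) decays like s^{−(a−1)/b} as s → ∞. -/
open MeasureTheory Filter

/-- for `b > 0`, `a > 1`, `a − 1 < 2b`, the integral
`C = ∫₀^∞ u^{−a}(1 + u^{−b})⁻² du` is finite and
`s^{(a−1)/b} · ∫₁^∞ ρ^{−a}(1 + sρ^{−b})⁻² dρ → C` as `s → ∞`; i.e. in this regime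
the power-law learning curve decays like `s^{−(a−1)/b}`. -/
theorem power_law_learning_curve_high_freq (a b : ℝ) (hb : 0 < b) (ha : 1 < a)
    (hab : a - 1 < 2 * b) :
    IntegrableOn (fun u : ℝ => u ^ (-a) * ((1 + u ^ (-b)) ^ 2)⁻¹) (Set.Ioi 0) ∧
    Tendsto
      (fun s : ℝ =>
        s ^ ((a - 1) / b) * ∫ ρ in Set.Ioi (1 : ℝ), ρ ^ (-a) * ((1 + s * ρ ^ (-b)) ^ 2)⁻¹)
      atTop
      (nhds (∫ u in Set.Ioi (0 : ℝ), u ^ (-a) * ((1 + u ^ (-b)) ^ 2)⁻¹)) := by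
  set f : ℝ → ℝ := fun u => u ^ (-a) * ((1 + u ^ (-b)) ^ 2)⁻¹ with hfdef
  -- continuity of f on (0, ∞)
  have hfc : ContinuousOn f (Set.Ioi 0) := by
    intro u hu
    have hu0 : (0:ℝ) < u := hu
    have h1 : ContinuousAt (fun u : ℝ => u ^ (-a)) u :=
      Real.continuousAt_rpow_const u _ (Or.inl hu0.ne')
    have h2 : ContinuousAt (fun u : ℝ => u ^ (-b)) u :=
      Real.continuousAt_rpow_const u _ (Or.inl hu0.ne')
    have hpos : ((1 + u ^ (-b)) ^ 2 : ℝ) ≠ 0 := by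
      have : (0:ℝ) < 1 + u ^ (-b) := by
        have := Real.rpow_nonneg hu0.le (-b); linarith
      positivity
    exact (h1.mul (((continuousAt_const.add h2).pow 2).inv₀ hpos)).continuousWithinAt
  have hf_nonneg : ∀ u : ℝ, 0 < u → 0 ≤ f u := by
    intro u hu
    have h1 : (0:ℝ) ≤ u ^ (-a) := Real.rpow_nonneg hu.le _
    have h2 : (0:ℝ) ≤ 1 + u ^ (-b) := by
      have := Real.rpow_nonneg hu.le (-b); linarith
    positivity
  -- integrability on (1, ∞)
  have hint1 : IntegrableOn f (Set.Ioi 1) := by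
    have hmeas : AEStronglyMeasurable f (volume.restrict (Set.Ioi (1:ℝ))) :=
      (hfc.mono (fun x (hx : x ∈ Set.Ioi (1:ℝ)) => Set.mem_Ioi.mpr (lt_trans one_pos (Set.mem_Ioi.mp hx)))).aestronglyMeasurable measurableSet_Ioi
    refine Integrable.mono (integrableOn_Ioi_rpow_of_lt (by linarith : -a < -1) one_pos)
      hmeas ?_
    rw [ae_restrict_iff' measurableSet_Ioi]
    filter_upwards with x hx
    have hx0 : (0:ℝ) < x := lt_trans one_pos hx
    have h2 : (0:ℝ) ≤ x ^ (-b) := Real.rpow_nonneg hx0.le _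
    have h3 : (1:ℝ) ≤ (1 + x ^ (-b)) ^ 2 := by nlinarith
    rw [Real.norm_eq_abs, Real.norm_eq_abs, abs_of_nonneg (hf_nonneg x hx0),
      abs_of_nonneg (Real.rpow_nonneg hx0.le _)]
    calc f x ≤ x ^ (-a) * 1 := by
          apply mul_le_mul_of_nonneg_left _ (Real.rpow_nonneg hx0.le _)
          exact inv_le_one_of_one_le₀ h3
      _ = x ^ (-a) := mul_one _
  -- integrability on (0, 1]
  have hint0 : IntegrableOn f (Set.Ioc 0 1) := by
    have hmeas : AEStronglyMeasurable f (volume.restrict (Set.Ioc (0:ℝ) 1)) :=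
      (hfc.mono (fun x hx => hx.1)).aestronglyMeasurable measurableSet_Ioc
    have hg : IntegrableOn (fun x : ℝ => x ^ (2*b - a)) (Set.Ioc (0:ℝ) 1) := by
      have := intervalIntegral.intervalIntegrable_rpow' (a := 0) (b := 1)
        (r := 2*b - a) (by linarith)
      rwa [intervalIntegrable_iff_integrableOn_Ioc_of_le zero_le_one] at this
    refine Integrable.mono hg hmeas ?_
    rw [ae_restrict_iff' measurableSet_Ioc]
    filter_upwards with x hx
    have hx0 : (0:ℝ) < x := hx.1
    rw [Real.norm_eq_abs, Real.norm_eq_abs, abs_of_nonneg (hf_nonneg x hx0),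
      abs_of_nonneg (Real.rpow_nonneg hx0.le _)]
    have hxb : (0:ℝ) < x ^ (-b) := Real.rpow_pos_of_pos hx0 _
    have hsq : (x ^ (-b)) ^ 2 ≤ (1 + x ^ (-b)) ^ 2 := by nlinarith
    have hsqpos : (0:ℝ) < (x ^ (-b)) ^ 2 := by positivity
    have hinv : ((1 + x ^ (-b)) ^ 2)⁻¹ ≤ ((x ^ (-b)) ^ 2)⁻¹ :=
      inv_anti₀ hsqpos hsq
    have heq : ((x ^ (-b)) ^ 2)⁻¹ = x ^ (2*b) := by
      rw [← Real.rpow_natCast (x ^ (-b)) 2, ← Real.rpow_mul hx0.le, ← Real.rpow_neg hx0.le]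
      norm_num; ring_nf
    calc f x ≤ x ^ (-a) * ((x ^ (-b)) ^ 2)⁻¹ :=
          mul_le_mul_of_nonneg_left hinv (Real.rpow_nonneg hx0.le _)
      _ = x ^ (-a) * x ^ (2*b) := by rw [heq]
      _ = x ^ (2*b - a) := by rw [← Real.rpow_add hx0]; ring_nf
  have hintC : IntegrableOn f (Set.Ioi 0) := by
    have := hint0.union hint1
    rwa [Set.Ioc_union_Ioi_eq_Ioi zero_le_one] at this
  refine ⟨hintC, ?_⟩
  -- key change of variables
  have key : ∀ s : ℝ, 1 ≤ s →
      s ^ ((a - 1) / b) * ∫ ρ in Set.Ioi (1 : ℝ), ρ ^ (-a) * ((1 + s * ρ ^ (-b)) ^ 2)⁻¹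
      = ∫ u in Set.Ioi (s ^ (-(1/b))), f u := by
    intro s hs
    have hs0 : (0:ℝ) < s := lt_of_lt_of_le one_pos hs
    set c : ℝ := s ^ (1/b) with hcdef
    have hc0 : (0:ℝ) < c := Real.rpow_pos_of_pos hs0 _
    have hcinv : s ^ (-(1/b)) = c⁻¹ := Real.rpow_neg hs0.le _
    have hsub := MeasureTheory.integral_comp_mul_left_Ioi
      (fun ρ => ρ ^ (-a) * ((1 + s * ρ ^ (-b)) ^ 2)⁻¹) c⁻¹ hc0
    rw [mul_inv_cancel₀ hc0.ne'] at hsub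
    have hpt : ∀ x ∈ Set.Ioi c⁻¹,
        (c * x) ^ (-a) * ((1 + s * (c * x) ^ (-b)) ^ 2)⁻¹ = c ^ (-a) * f x := by
      intro x hx
      have hx0 : (0:ℝ) < x := lt_trans (inv_pos.mpr hc0) hx
      have h1 : (c * x) ^ (-a) = c ^ (-a) * x ^ (-a) := Real.mul_rpow hc0.le hx0.le
      have h2 : s * (c * x) ^ (-b) = x ^ (-b) := by
        rw [Real.mul_rpow hc0.le hx0.le, hcdef, ← Real.rpow_mul hs0.le]
        have : 1 / b * -b = -1 := by field_simp
        rw [this, Real.rpow_neg_one, ← mul_assoc, mul_inv_cancel₀ hs0.ne', one_mul]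
      rw [h1, h2, hfdef]; ring
    have hcongr : (∫ x in Set.Ioi c⁻¹,
        (c * x) ^ (-a) * ((1 + s * (c * x) ^ (-b)) ^ 2)⁻¹)
        = ∫ x in Set.Ioi c⁻¹, c ^ (-a) * f x :=
      MeasureTheory.setIntegral_congr_fun measurableSet_Ioi hpt
    rw [hcongr] at hsub
    rw [MeasureTheory.integral_const_mul] at hsub
    -- hsub : c^(-a) * ∫_{Ioi c⁻¹} f = c⁻¹ • ∫_{Ioi 1} g_s
    have hfactor : s ^ ((a - 1) / b) = c ^ (a - 1) := by
      rw [hcdef, ← Real.rpow_mul hs0.le]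
      congr 1; field_simp
    rw [hcinv, hfactor]
    have : (∫ ρ in Set.Ioi (1:ℝ), ρ ^ (-a) * ((1 + s * ρ ^ (-b)) ^ 2)⁻¹)
        = c * (c ^ (-a) * ∫ x in Set.Ioi c⁻¹, f x) := by
      rw [hsub, smul_eq_mul, ← mul_assoc, mul_inv_cancel₀ hc0.ne', one_mul]
    rw [this, ← mul_assoc, ← mul_assoc]
    have : c ^ (a - 1) * c * c ^ (-a) = 1 := by
      have h1 : c ^ (a - 1) * c = c ^ a := by
        rw [Real.rpow_sub hc0, Real.rpow_one]; field_simp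
      rw [h1, ← Real.rpow_add hc0]; simp
    rw [this, one_mul]
  -- limit of truncated integrals
  have hIcc : IntegrableOn f (Set.Icc 0 1) := by
    rwa [integrableOn_Icc_iff_integrableOn_Ioc]
  have hcont := intervalIntegral.continuousOn_primitive (f := f) (μ := volume)
    (a := (0:ℝ)) (b := 1) hIcc
  have hF0 : Tendsto (fun x => ∫ t in Set.Ioc 0 x, f t) (nhdsWithin 0 (Set.Icc 0 1))
      (nhds 0) := by
    have := (hcont 0 (Set.left_mem_Icc.mpr zero_le_one))
    simpa [ContinuousWithinAt, Set.Ioc_self] using this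
  have heps : Tendsto (fun s : ℝ => s ^ (-(1/b))) atTop
      (nhdsWithin 0 (Set.Icc 0 1)) := by
    rw [tendsto_nhdsWithin_iff]
    constructor
    · exact tendsto_rpow_neg_atTop (by positivity)
    · filter_upwards [eventually_ge_atTop (1:ℝ)] with s hs
      have hs0 : (0:ℝ) < s := lt_of_lt_of_le one_pos hs
      constructor
      · exact (Real.rpow_pos_of_pos hs0 _).le
      · apply Real.rpow_le_one_of_one_le_of_nonpos hs
        simp only [neg_nonpos]
        positivity
  have hcomp : Tendsto (fun s : ℝ => ∫ t in Set.Ioc 0 (s ^ (-(1/b))), f t) atTop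
      (nhds 0) := hF0.comp heps
  have hsplit : ∀ s : ℝ, 1 ≤ s →
      (∫ u in Set.Ioi (s ^ (-(1/b))), f u)
      = (∫ u in Set.Ioi (0:ℝ), f u) - ∫ t in Set.Ioc 0 (s ^ (-(1/b))), f t := by
    intro s hs
    have hs0 : (0:ℝ) < s := lt_of_lt_of_le one_pos hs
    have he0 : (0:ℝ) < s ^ (-(1/b)) := Real.rpow_pos_of_pos hs0 _
    have hunion : Set.Ioc 0 (s ^ (-(1/b))) ∪ Set.Ioi (s ^ (-(1/b))) = Set.Ioi (0:ℝ) :=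
      Set.Ioc_union_Ioi_eq_Ioi he0.le
    have hdisj : Disjoint (Set.Ioc (0:ℝ) (s ^ (-(1/b)))) (Set.Ioi (s ^ (-(1/b)))) :=
      Set.Ioc_disjoint_Ioi le_rfl
    have h1 : IntegrableOn f (Set.Ioc 0 (s ^ (-(1/b)))) :=
      hintC.mono_set (by intro x hx; exact hx.1)
    have h2 : IntegrableOn f (Set.Ioi (s ^ (-(1/b)))) :=
      hintC.mono_set (fun x hx => lt_trans he0 hx)
    have := MeasureTheory.setIntegral_union hdisj measurableSet_Ioi h1 h2
    rw [hunion] at this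
    rw [this]; ring
  have hmain : Tendsto (fun s : ℝ => ∫ u in Set.Ioi (s ^ (-(1/b))), f u) atTop
      (nhds (∫ u in Set.Ioi (0:ℝ), f u)) := by
    have := (tendsto_const_nhds (x := ∫ u in Set.Ioi (0:ℝ), f u)
      (f := atTop (α := ℝ))).sub hcomp
    rw [sub_zero] at this
    refine Tendsto.congr' ?_ this
    filter_upwards [eventually_ge_atTop (1:ℝ)] with s hs
    exact (hsplit s hs).symm
  refine Tendsto.congr' ?_ hmain
  filter_upwards [eventually_ge_atTop (1:ℝ)] with s hs
  exact (key s hs).symm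
end
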